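/- The multilinear part Lie_n of the free Lie ring on generators x_1,...,x_n (the span of Lie monomials containing each generator exactly once) is a free abelian group of rank (n-1)!. -/

import Mathlib

open FreeLieAlgebra

/-- `IsLieMono a s` : `a` is a Lie monomial in the free Lie ring over ℤ on generators
`Fin n`, involving exactly the generators in `s`, each exactly once. -/
inductive IsLieMono {n : ℕ} : FreeLieAlgebra ℤ (Fin n) → Finset (Fin n) → Prop
  | of (i : Fin n) : IsLieMono (of ℤ i) {i}
  | bracket {a b : FreeLieAlgebra ℤ (Fin n)} {s t : Finset (Fin n)} :
      IsLieMono a s → IsLieMono b t → Disjoint s t → IsLieMono ⁅a, b⁆ (s ∪ t)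

/-- `LieN n` : the multilinear part of the free Lie ring on `n` generators, i.e. the
ℤ-span of the Lie monomials containing each generator exactly once. -/
noncomputable def LieN (n : ℕ) : Submodule ℤ (FreeLieAlgebra ℤ (Fin n)) :=
  Submodule.span ℤ {a | IsLieMono a Finset.univ}

namespace LieNAux

variable {n : ℕ}

attribute [local instance] LieRing.ofAssociativeRing

/-- Left-normed iterated bracket `⁅⁅⁅c, x_{l₀}⁆, x_{l₁}⁆, …⁆`. -/
noncomputable def foldBr (c : FreeLieAlgebra ℤ (Fin n)) (l : List (Fin n)) :
    FreeLieAlgebra ℤ (Fin n) :=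
  l.foldl (fun x i => ⁅x, of ℤ i⁆) c

@[simp] lemma foldBr_nil (c : FreeLieAlgebra ℤ (Fin n)) : foldBr c [] = c := rfl

lemma foldBr_append (c : FreeLieAlgebra ℤ (Fin n)) (l₁ l₂ : List (Fin n)) :
    foldBr c (l₁ ++ l₂) = foldBr (foldBr c l₁) l₂ :=
  List.foldl_append

lemma foldBr_concat (c : FreeLieAlgebra ℤ (Fin n)) (l : List (Fin n)) (j : Fin n) :
    foldBr c (l ++ [j]) = ⁅foldBr c l, of ℤ j⁆ := by
  rw [foldBr_append]; rfl

/-- The set of left-normed extensions of `c` by lists enumerating `t`. -/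
def PSpan (c : FreeLieAlgebra ℤ (Fin n)) (t : Finset (Fin n)) : Set (FreeLieAlgebra ℤ (Fin n)) :=
  {x | ∃ l : List (Fin n), l.Nodup ∧ l.toFinset = t ∧ x = foldBr c l}

lemma bracket_mem_span {b : FreeLieAlgebra ℤ (Fin n)} {t : Finset (Fin n)}
    (hb : IsLieMono b t) :
    ∀ c, ⁅c, b⁆ ∈ Submodule.span ℤ (PSpan c t) := by
  induction hb with
  | of i =>
    intro c
    exact Submodule.subset_span ⟨[i], by simp, by simp, rfl⟩
  | @bracket b₁ b₂ t₁ t₂ h₁ h₂ hd ih₁ ih₂ =>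
    intro c
    have key : ⁅c, ⁅b₁, b₂⁆⁆ = ⁅⁅c, b₁⁆, b₂⁆ - ⁅⁅c, b₂⁆, b₁⁆ := by
      rw [leibniz_lie, sub_eq_add_neg, lie_skew]
    rw [key]
    have main : ∀ (b' : FreeLieAlgebra ℤ (Fin n)) (t₁' t₂' : Finset (Fin n)),
        Disjoint t₁' t₂' →
        (∀ c', ⁅c', b'⁆ ∈ Submodule.span ℤ (PSpan c' t₂')) →
        ∀ x ∈ Submodule.span ℤ (PSpan c t₁'),
        ⁅x, b'⁆ ∈ Submodule.span ℤ (PSpan c (t₁' ∪ t₂')) := by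
      intro b' t₁' t₂' hd' ih' x hx
      induction hx using Submodule.span_induction with
      | mem y hy =>
        obtain ⟨l₁, hl₁n, hl₁t, rfl⟩ := hy
        refine Submodule.span_le.mpr ?_ (ih' (foldBr c l₁))
        rintro _ ⟨l₂, hl₂n, hl₂t, rfl⟩
        refine Submodule.subset_span ⟨l₁ ++ l₂, ?_, ?_, (foldBr_append _ _ _).symm⟩
        · refine hl₁n.append hl₂n ?_
          rw [← List.disjoint_toFinset_iff_disjoint, hl₁t, hl₂t]
          exact hd'
        · rw [List.toFinset_append, hl₁t, hl₂t]
      | zero => simp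
      | add a b _ _ iha ihb => rw [add_lie]; exact add_mem iha ihb
      | smul r a _ ih => rw [smul_lie]; exact Submodule.smul_mem _ r ih
    have hB := main b₁ t₂ t₁ hd.symm ih₁ _ (ih₂ c)
    rw [Finset.union_comm] at hB
    exact sub_mem (main b₂ t₁ t₂ hd ih₂ _ (ih₁ c)) hB

lemma bracket_mem_span_of_mem {b : FreeLieAlgebra ℤ (Fin n)} {t : Finset (Fin n)}
    (hb : IsLieMono b t) {c : FreeLieAlgebra ℤ (Fin n)} {i₀ : Fin n} {u : Finset (Fin n)}
    (hd : Disjoint u t)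
    (hc : c ∈ Submodule.span ℤ (PSpan (of ℤ i₀) u)) :
    ⁅c, b⁆ ∈ Submodule.span ℤ (PSpan (of ℤ i₀) (u ∪ t)) := by
  induction hc using Submodule.span_induction with
  | mem y hy =>
    obtain ⟨l₁, hl₁n, hl₁t, rfl⟩ := hy
    refine Submodule.span_le.mpr ?_ (bracket_mem_span hb (foldBr (of ℤ i₀) l₁))
    rintro _ ⟨l₂, hl₂n, hl₂t, rfl⟩
    refine Submodule.subset_span ⟨l₁ ++ l₂, ?_, ?_, (foldBr_append _ _ _).symm⟩
    · refine hl₁n.append hl₂n ?_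
      rw [← List.disjoint_toFinset_iff_disjoint, hl₁t, hl₂t]
      exact hd
    · rw [List.toFinset_append, hl₁t, hl₂t]
  | zero => simp
  | add a b _ _ iha ihb => rw [add_lie]; exact add_mem iha ihb
  | smul r a _ ih => rw [smul_lie]; exact Submodule.smul_mem _ r ih

lemma mono_mem_span {a : FreeLieAlgebra ℤ (Fin n)} {s : Finset (Fin n)}
    (ha : IsLieMono a s) {i₀ : Fin n} (hi : i₀ ∈ s) :
    a ∈ Submodule.span ℤ (PSpan (of ℤ i₀) (s.erase i₀)) := by
  induction ha with
  | of i =>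
    simp only [Finset.mem_singleton] at hi
    subst hi
    exact Submodule.subset_span ⟨[], by simp, by simp, rfl⟩
  | @bracket a b s t h₁ h₂ hd ih₁ ih₂ =>
    rcases Finset.mem_union.mp hi with h | h
    · have hnot : i₀ ∉ t := fun ht => (Finset.disjoint_left.mp hd h) ht
      have hset : (s ∪ t).erase i₀ = s.erase i₀ ∪ t := by
        rw [Finset.erase_union_distrib, Finset.erase_eq_of_notMem hnot]
      rw [hset]
      exact bracket_mem_span_of_mem h₂
        (Finset.disjoint_of_subset_left (Finset.erase_subset _ _) hd) (ih₁ h)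
    · have hnot : i₀ ∉ s := fun hs => (Finset.disjoint_left.mp hd hs) h
      have hset : (s ∪ t).erase i₀ = t.erase i₀ ∪ s := by
        rw [Finset.erase_union_distrib, Finset.erase_eq_of_notMem hnot, Finset.union_comm]
      rw [hset, ← lie_skew]
      refine neg_mem ?_
      exact bracket_mem_span_of_mem h₁
        (Finset.disjoint_of_subset_left (Finset.erase_subset _ _) hd.symm) (ih₂ h)

lemma isLieMono_foldBr (i₀ : Fin n) (l : List (Fin n)) (h : (i₀ :: l).Nodup) :
    IsLieMono (foldBr (of ℤ i₀) l) (insert i₀ l.toFinset) := by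
  induction l using List.reverseRecOn with
  | nil => simpa using IsLieMono.of i₀
  | append_singleton l j ih =>
    have h'' := h
    rw [show i₀ :: (l ++ [j]) = (i₀ :: l) ++ [j] from rfl, List.nodup_append] at h''
    have h' : (i₀ :: l).Nodup := h''.1
    have hj : j ∉ i₀ :: l := fun hm => h''.2.2 j hm j (List.mem_singleton_self j) rfl
    rw [foldBr_concat]
    have hmono := IsLieMono.bracket (ih h') (IsLieMono.of j)
      (by
        simp only [Finset.disjoint_singleton_right, Finset.mem_insert, List.mem_toFinset]
        intro hc
        rcases hc with hc | hc
        · exact hj (by simp [hc])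
        · exact hj (List.mem_cons_of_mem _ hc))
    have hset : insert i₀ l.toFinset ∪ {j} = insert i₀ (l ++ [j]).toFinset := by
      ext x
      simp only [Finset.mem_union, Finset.mem_insert, List.mem_toFinset, Finset.mem_singleton,
        List.mem_append, List.mem_singleton]
      tauto
    rwa [hset] at hmono

/-! ### The embedding into the free associative ring -/

/-- The Lie ring map into the monoid algebra of the free monoid. -/
noncomputable def ψ : FreeLieAlgebra ℤ (Fin n) →ₗ⁅ℤ⁆ MonoidAlgebra ℤ (FreeMonoid (Fin n)) :=
  FreeLieAlgebra.lift ℤ (fun i => MonoidAlgebra.single (FreeMonoid.of i) (1 : ℤ))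

@[simp] lemma ψ_of (i : Fin n) :
    ψ (of ℤ i) = MonoidAlgebra.single (FreeMonoid.of i) (1 : ℤ) := by
  exact FreeLieAlgebra.lift_of_apply (R := ℤ) _ _

/-- The span of words whose first letter differs from `i₀`. -/
noncomputable def Bad (i₀ : Fin n) : Submodule ℤ (MonoidAlgebra ℤ (FreeMonoid (Fin n))) :=
  Submodule.span ℤ
    {x | ∃ j l, j ≠ i₀ ∧ x = MonoidAlgebra.single (FreeMonoid.ofList (j :: l)) (1 : ℤ)}

lemma mul_single_mem_bad {i₀ : Fin n} {x : MonoidAlgebra ℤ (FreeMonoid (Fin n))}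
    (hx : x ∈ Bad i₀) (j : Fin n) :
    x * MonoidAlgebra.single (FreeMonoid.of j) (1 : ℤ) ∈ Bad i₀ := by
  induction hx using Submodule.span_induction with
  | mem y hy =>
    obtain ⟨j', l', hj', rfl⟩ := hy
    rw [MonoidAlgebra.single_mul_single, one_mul]
    have hword : FreeMonoid.ofList (j' :: l') * FreeMonoid.of j
        = FreeMonoid.ofList (j' :: (l' ++ [j])) := by
      rw [show j' :: (l' ++ [j]) = (j' :: l') ++ [j] from rfl, FreeMonoid.ofList_append]
      rfl
    rw [hword]
    exact Submodule.subset_span ⟨j', l' ++ [j], hj', rfl⟩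
  | zero => simp
  | add a b _ _ iha ihb => rw [add_mul]; exact add_mem iha ihb
  | smul r a _ ih => rw [smul_mul_assoc]; exact Submodule.smul_mem _ r ih

lemma single_mul_mem_bad {i₀ j : Fin n} (hj : j ≠ i₀)
    (x : MonoidAlgebra ℤ (FreeMonoid (Fin n))) :
    MonoidAlgebra.single (FreeMonoid.of j) (1 : ℤ) * x ∈ Bad i₀ := by
  induction x using MonoidAlgebra.induction_linear with
  | zero => simp
  | add f g hf hg => rw [mul_add]; exact add_mem hf hg
  | single w c =>
    show MonoidAlgebra.single (FreeMonoid.of j) (1 : ℤ) * MonoidAlgebra.single w c ∈ Bad i₀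
    rw [MonoidAlgebra.single_mul_single, one_mul]
    have h1 : (MonoidAlgebra.single (FreeMonoid.of j * w) c :
        MonoidAlgebra ℤ (FreeMonoid (Fin n)))
        = c • MonoidAlgebra.single (FreeMonoid.of j * w) (1 : ℤ) := by
      rw [MonoidAlgebra.smul_single', mul_one]
    rw [h1]
    refine Submodule.smul_mem _ c ?_
    have hword : FreeMonoid.of j * w = FreeMonoid.ofList (j :: FreeMonoid.toList w) := by
      conv_lhs => rw [← FreeMonoid.ofList_toList w]
      rw [show j :: FreeMonoid.toList w = [j] ++ FreeMonoid.toList w from rfl,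
        FreeMonoid.ofList_append]
      rfl
    rw [hword]
    exact Submodule.subset_span ⟨j, FreeMonoid.toList w, hj, rfl⟩

lemma psi_foldBr (i₀ : Fin n) (l : List (Fin n)) (h : i₀ ∉ l) :
    ψ (foldBr (of ℤ i₀) l)
      - MonoidAlgebra.single (FreeMonoid.ofList (i₀ :: l)) (1 : ℤ) ∈ Bad i₀ := by
  induction l using List.reverseRecOn with
  | nil =>
    have h1 : FreeMonoid.ofList [i₀] = FreeMonoid.of i₀ := rfl
    simp [h1]
  | append_singleton l j ih =>
    have hl : i₀ ∉ l := fun hc => h (List.mem_append_left _ hc)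
    have hji : j ≠ i₀ := fun hc => h (by simp [hc.symm])
    have hb := ih hl
    rw [foldBr_concat]
    set u := ψ (foldBr (of ℤ i₀) l) with hu
    set w₀ : MonoidAlgebra ℤ (FreeMonoid (Fin n)) :=
      MonoidAlgebra.single (FreeMonoid.ofList (i₀ :: l)) (1 : ℤ) with hw₀
    set sj : MonoidAlgebra ℤ (FreeMonoid (Fin n)) :=
      MonoidAlgebra.single (FreeMonoid.of j) (1 : ℤ) with hsj
    have hlie : ψ ⁅foldBr (of ℤ i₀) l, of ℤ j⁆ = u * sj - sj * u := by
      rw [LieHom.map_lie, ψ_of, Ring.lie_def]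
    have hword : w₀ * sj
        = MonoidAlgebra.single (FreeMonoid.ofList (i₀ :: (l ++ [j]))) (1 : ℤ) := by
      rw [hw₀, hsj, MonoidAlgebra.single_mul_single, one_mul]
      have : FreeMonoid.ofList (i₀ :: l) * FreeMonoid.of j
          = FreeMonoid.ofList (i₀ :: (l ++ [j])) := by
        rw [show i₀ :: (l ++ [j]) = (i₀ :: l) ++ [j] from rfl, FreeMonoid.ofList_append]
        rfl
      rw [this]
    rw [hlie, ← hword]
    have halg : u * sj - sj * u - w₀ * sj = (u - w₀) * sj - sj * u := by
      rw [sub_mul]; abel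
    rw [halg]
    exact sub_mem (mul_single_mem_bad hb j) (single_mul_mem_bad hji u)

lemma bad_coeff {i₀ : Fin n} (l : List (Fin n)) {x : MonoidAlgebra ℤ (FreeMonoid (Fin n))}
    (hx : x ∈ Bad i₀) :
    x.coeff (FreeMonoid.ofList (i₀ :: l)) = 0 := by
  induction hx using Submodule.span_induction with
  | mem y hy =>
    obtain ⟨j, l', hj, rfl⟩ := hy
    rw [MonoidAlgebra.coeff_single]
    refine Finsupp.single_eq_of_ne' ?_
    intro hc
    apply hj
    have h2 := congrArg FreeMonoid.toList hc
    rw [FreeMonoid.toList_ofList, FreeMonoid.toList_ofList] at h2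
    injection h2
  | zero => simp
  | add a b _ _ iha ihb => rw [MonoidAlgebra.coeff_add, Finsupp.add_apply, iha, ihb, add_zero]
  | smul r a _ ih => rw [MonoidAlgebra.coeff_smul_apply, ih, smul_zero]

/-! ### The basis indexed by permutations -/

/-- The list `[σ 0 + 1, …, σ (m-1) + 1]` of generators. -/
def Lst (m : ℕ) (σ : Equiv.Perm (Fin m)) : List (Fin (m + 1)) :=
  List.ofFn (fun i => (σ i).succ)

lemma lst_nodup (m : ℕ) (σ : Equiv.Perm (Fin m)) : (Lst m σ).Nodup :=
  List.nodup_ofFn.mpr fun a b hab => σ.injective (Fin.succ_injective _ hab)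

lemma zero_not_mem_lst (m : ℕ) (σ : Equiv.Perm (Fin m)) : (0 : Fin (m + 1)) ∉ Lst m σ := by
  intro h
  rw [Lst, List.mem_ofFn] at h
  obtain ⟨i, hi⟩ := h
  exact Fin.succ_ne_zero _ hi

lemma lst_toFinset (m : ℕ) (σ : Equiv.Perm (Fin m)) :
    (Lst m σ).toFinset = Finset.univ.erase (0 : Fin (m + 1)) := by
  ext x
  simp only [List.mem_toFinset, Lst, List.mem_ofFn, Finset.mem_erase, Finset.mem_univ,
    and_true]
  constructor
  · rintro ⟨i, rfl⟩; exact Fin.succ_ne_zero _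
  · intro hx
    induction x using Fin.cases with
    | zero => exact absurd rfl hx
    | succ i => exact ⟨σ.symm i, by simp⟩

/-- The candidate basis vectors of `Lie_n`. -/
noncomputable def V (m : ℕ) (σ : Equiv.Perm (Fin m)) : FreeLieAlgebra ℤ (Fin (m + 1)) :=
  foldBr (of ℤ 0) (Lst m σ)

lemma V_isLieMono (m : ℕ) (σ : Equiv.Perm (Fin m)) :
    IsLieMono (V m σ) Finset.univ := by
  have h := isLieMono_foldBr (0 : Fin (m + 1)) (Lst m σ)
    (List.nodup_cons.mpr ⟨zero_not_mem_lst m σ, lst_nodup m σ⟩)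
  rwa [lst_toFinset, Finset.insert_erase (Finset.mem_univ _)] at h

lemma V_mem_lieN (m : ℕ) (σ : Equiv.Perm (Fin m)) : V m σ ∈ LieN (m + 1) :=
  Submodule.subset_span (V_isLieMono m σ)

lemma lst_injective (m : ℕ) : Function.Injective (Lst m) := by
  intro σ τ h
  ext i
  have h1 : (Lst m σ)[(i : ℕ)]'(by simp [Lst]) = (Lst m τ)[(i : ℕ)]'(by simp [Lst]) := by
    simp only [h]
  simp only [Lst, List.getElem_ofFn] at h1
  have h2 := Fin.succ_injective _ h1
  have h3 : (⟨(i : ℕ), i.isLt⟩ : Fin m) = i := rfl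
  rw [h3] at h2
  exact congrArg Fin.val h2

/-- The word `x₀ x_{σ(1)+1} ⋯` associated with a permutation. -/
def W (m : ℕ) (σ : Equiv.Perm (Fin m)) : FreeMonoid (Fin (m + 1)) :=
  FreeMonoid.ofList ((0 : Fin (m + 1)) :: Lst m σ)

lemma psi_V (m : ℕ) (σ : Equiv.Perm (Fin m)) :
    ψ (V m σ) - MonoidAlgebra.single (W m σ) (1 : ℤ) ∈ Bad (0 : Fin (m + 1)) :=
  psi_foldBr _ _ (zero_not_mem_lst m σ)

lemma coeff_V (m : ℕ) (σ τ : Equiv.Perm (Fin m)) :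
    (ψ (V m τ)).coeff (W m σ) = if τ = σ then 1 else 0 := by
  have hb := psi_V m τ
  have h0 : (ψ (V m τ) - MonoidAlgebra.single (W m τ) (1 : ℤ)).coeff (W m σ) = 0 :=
    bad_coeff (Lst m σ) hb
  rw [MonoidAlgebra.coeff_sub, Finsupp.sub_apply, sub_eq_zero] at h0
  rw [h0, MonoidAlgebra.coeff_single]
  by_cases h : τ = σ
  · subst h; simp [Finsupp.single_eq_same]
  · rw [if_neg h]
    refine Finsupp.single_eq_of_ne' ?_
    intro hc
    apply h
    apply lst_injective m
    have h2 := congrArg FreeMonoid.toList hc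
    rw [W, W, FreeMonoid.toList_ofList, FreeMonoid.toList_ofList] at h2
    injection h2

lemma V_linearIndependent (m : ℕ) : LinearIndependent ℤ (V m) := by
  rw [Fintype.linearIndependent_iff]
  intro g hg σ
  have h1 : ψ (∑ τ, g τ • V m τ) = ∑ τ, g τ • ψ (V m τ) := by
    rw [← LieHom.coe_toLinearMap, map_sum]
    refine Finset.sum_congr rfl fun τ _ => ?_
    rw [map_smul, LieHom.coe_toLinearMap]
  have hF : (∑ τ, g τ • ψ (V m τ)).coeff (W m σ) = 0 := by
    rw [← h1, hg, map_zero]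
    rfl
  rw [MonoidAlgebra.coeff_sum, Finsupp.finset_sum_apply] at hF
  have heq : ∀ τ ∈ Finset.univ, (g τ • ψ (V m τ)).coeff (W m σ)
      = if τ = σ then g τ else 0 := by
    intro τ _
    rw [MonoidAlgebra.coeff_smul_apply, coeff_V, smul_eq_mul]
    split <;> simp
  rw [Finset.sum_congr rfl heq, Finset.sum_ite_eq' Finset.univ σ g] at hF
  simpa using hF

lemma span_V (m : ℕ) : Submodule.span ℤ (Set.range (V m)) = LieN (m + 1) := by
  apply le_antisymm
  · rw [Submodule.span_le]
    rintro _ ⟨σ, rfl⟩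
    exact V_mem_lieN m σ
  · rw [LieN, Submodule.span_le]
    intro a ha
    have h := mono_mem_span ha (Finset.mem_univ (0 : Fin (m + 1)))
    refine Submodule.span_le.mpr ?_ h
    rintro _ ⟨l, hln, hfin, rfl⟩
    have hlen : l.length = m := by
      have h1 : l.toFinset.card = l.length := List.toFinset_card_of_nodup hln
      have h2 : (Finset.univ.erase (0 : Fin (m + 1))).card = m := by
        rw [Finset.card_erase_of_mem (Finset.mem_univ _)]
        simp
      rw [hfin, h2] at h1
      omega
    have hlt : ∀ i : Fin m, (i : ℕ) < l.length := fun i => by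
      rw [hlen]; exact i.isLt
    have hne : ∀ i : Fin m, l[(i : ℕ)]'(hlt i) ≠ 0 := by
      intro i hc
      have hmem : (0 : Fin (m + 1)) ∈ l.toFinset :=
        List.mem_toFinset.mpr (hc ▸ List.getElem_mem (hlt i))
      rw [hfin] at hmem
      simp at hmem
    set f : Fin m → Fin m := fun i => Fin.pred (l[(i : ℕ)]'(hlt i)) (hne i) with hf
    have hfinj : Function.Injective f := by
      intro a b hab
      have h4 : l[(a : ℕ)]'(hlt a) = l[(b : ℕ)]'(hlt b) := by
        have := congrArg Fin.succ hab
        simpa only [hf, Fin.succ_pred] using this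
      have := (hln.getElem_inj_iff).mp h4
      exact Fin.val_injective this
    have hbij : Function.Bijective f := Finite.injective_iff_bijective.mp hfinj
    refine Submodule.subset_span ⟨Equiv.ofBijective f hbij, ?_⟩
    have hlst : Lst m (Equiv.ofBijective f hbij) = l := by
      apply List.ext_getElem
      · simp [Lst, hlen]
      · intro i h1 h2
        simp only [Lst, List.getElem_ofFn, Equiv.ofBijective_apply, hf, Fin.succ_pred]
    rw [V, hlst]

/-- The basis of `Lie_{m+1}` indexed by permutations of `Fin m`. -/
noncomputable def theBasis (m : ℕ) : Module.Basis (Equiv.Perm (Fin m)) ℤ (LieN (m + 1)) := by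
  refine Module.Basis.mk (v := fun σ => (⟨V m σ, V_mem_lieN m σ⟩ : LieN (m + 1))) ?_ ?_
  · apply LinearIndependent.of_comp (LieN (m + 1)).subtype
    have h1 : (⇑(LieN (m + 1)).subtype ∘ fun σ => (⟨V m σ, V_mem_lieN m σ⟩ : LieN (m + 1)))
        = V m := rfl
    rw [h1]
    exact V_linearIndependent m
  · have hmap : Submodule.map (LieN (m + 1)).subtype
        (Submodule.span ℤ (Set.range fun σ => (⟨V m σ, V_mem_lieN m σ⟩ : LieN (m + 1))))
        = Submodule.map (LieN (m + 1)).subtype ⊤ := by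
      rw [Submodule.map_span, Submodule.map_subtype_top, ← Set.range_comp]
      have h2 : ((LieN (m + 1)).subtype ∘ fun σ => (⟨V m σ, V_mem_lieN m σ⟩ : LieN (m + 1)))
          = V m := rfl
      rw [h2, span_V]
    have h3 := Submodule.map_injective_of_injective (Submodule.injective_subtype _) hmap
    exact h3.ge

end LieNAux

/-- the multilinear part `Lie_n` of the free Lie ring on `n` generators is
a free abelian group of rank `(n-1)!`. -/
theorem lieN_free_of_rank_factorial (n : ℕ) (hn : 1 ≤ n) :
    Nonempty (Module.Basis (Fin (Nat.factorial (n - 1))) ℤ (LieN n)) := by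
  obtain ⟨m, rfl⟩ : ∃ m, n = m + 1 := ⟨n - 1, (Nat.succ_pred_eq_of_pos hn).symm⟩
  have e : Equiv.Perm (Fin m) ≃ Fin (Nat.factorial (m + 1 - 1)) := by
    apply Fintype.equivFinOfCardEq
    simp [Fintype.card_perm]
  exact ⟨(LieNAux.theBasis m).reindex e⟩
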